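/- Running intersection forces descent data: let V₀ be a finite set of variables with finite state spaces, R a commutative semiring, T a finite tree with vertex set I, and clusters U_i ⊆ V₀ for i ∈ I satisfying the running intersection property (for all i, j ∈ I, the intersection U_i ∩ U_j is contained in U_t for every vertex t on the unique path from i to j in T). Suppose the cluster beliefs B_i : Ω(U_i) → R satisfy edgewise separator consistency: for every tree edge {s, t}, ρ_{U_s → U_s∩U_t}(B_s) = ρ_{U_t → U_s∩U_t}(B_t). Then the family (B_i)_{i∈I} is pairwise compatible on all overlaps: for ALL pairs i, j ∈ I, ρ_{U_i → U_i∩U_j}(B_i) = ρ_{U_j → U_i∩U_j}(B_j). -/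
import Mathlib


/-- Configurations on a subset `S` of the variable set: an element of `∏_{v ∈ S} Ω v`. -/
abbrev Config {V₀ : Type} (Ω : V₀ → Type) (S : Finset V₀) : Type :=
  ∀ v : {v // v ∈ S}, Ω v.1

/-- Glue a configuration on `W` with a configuration on `U \ W` to a configuration on `U`. -/
def glue {V₀ : Type} [DecidableEq V₀] {Ω : V₀ → Type} {W U : Finset V₀}
    (y : Config Ω W) (z : Config Ω (U \ W)) : Config Ω U :=
  fun v => if hv : v.1 ∈ W then y ⟨v.1, hv⟩ else z ⟨v.1, Finset.mem_sdiff.mpr ⟨v.2, hv⟩⟩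

/-- Marginalization (restriction) map `ρ_{U→W}` for `W ⊆ U`:
`(ρ_{U→W} F)(y) = ∑_{z ∈ Ω(U∖W)} F(y, z)`. -/
def marg {V₀ : Type} [DecidableEq V₀] {Ω : V₀ → Type} [∀ v, Fintype (Ω v)]
    {R : Type} [AddCommMonoid R] {W U : Finset V₀} (_hWU : W ⊆ U)
    (F : Config Ω U → R) : Config Ω W → R :=
  fun y => ∑ z : Config Ω (U \ W), F (glue y z)

/-- Splitting `U \ W` into `X \ W` and `U \ X` for `W ⊆ X ⊆ U`. -/
def splitEquiv {V₀ : Type} [DecidableEq V₀] {Ω : V₀ → Type} {W X U : Finset V₀}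
    (hWX : W ⊆ X) (hXU : X ⊆ U) :
    Config Ω (U \ W) ≃ Config Ω (X \ W) × Config Ω (U \ X) where
  toFun u :=
    (fun v => u ⟨v.1, by
        rcases Finset.mem_sdiff.mp v.2 with ⟨h1, h2⟩
        exact Finset.mem_sdiff.mpr ⟨hXU h1, h2⟩⟩,
     fun v => u ⟨v.1, by
        rcases Finset.mem_sdiff.mp v.2 with ⟨h1, h2⟩
        exact Finset.mem_sdiff.mpr ⟨h1, fun hW => h2 (hWX hW)⟩⟩)
  invFun zw v :=
    if hv : v.1 ∈ X then
      zw.1 ⟨v.1, Finset.mem_sdiff.mpr ⟨hv, (Finset.mem_sdiff.mp v.2).2⟩⟩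
    else
      zw.2 ⟨v.1, Finset.mem_sdiff.mpr ⟨(Finset.mem_sdiff.mp v.2).1, hv⟩⟩
  left_inv u := by
    funext v
    by_cases hv : v.1 ∈ X <;> simp [hv]
  right_inv zw := by
    ext v
    · have hv : v.1 ∈ X := (Finset.mem_sdiff.mp v.2).1
      simp [hv]
    · have hv : v.1 ∉ X := (Finset.mem_sdiff.mp v.2).2
      simp [hv]

/-- Marginalization is transitive: `ρ_{X→W} ∘ ρ_{U→X} = ρ_{U→W}`. -/
theorem marg_marg {V₀ : Type} [DecidableEq V₀] {Ω : V₀ → Type} [∀ v, Fintype (Ω v)]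
    {R : Type} [AddCommMonoid R] {W X U : Finset V₀} (hWX : W ⊆ X) (hXU : X ⊆ U)
    (F : Config Ω U → R) :
    marg hWX (marg hXU F) = marg (hWX.trans hXU) F := by
  funext y
  unfold marg
  rw [← Equiv.sum_comp (splitEquiv hWX hXU).symm (fun u => F (glue y u)),
    Fintype.sum_prod_type]
  refine Finset.sum_congr rfl fun z _ => Finset.sum_congr rfl fun w _ => ?_
  congr 1
  funext v
  by_cases hvX : v.1 ∈ X
  · by_cases hvW : v.1 ∈ W <;> simp [glue, splitEquiv, hvX, hvW]
  · have hvW : v.1 ∉ W := fun h => hvX (hWX h)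
    simp [glue, splitEquiv, hvX, hvW]

/-- Edgewise consistency transports along an edge, for any common subset `W`. -/
theorem marg_eq_of_adj {V₀ : Type} [DecidableEq V₀]
    {Ω : V₀ → Type} [∀ v, Fintype (Ω v)] {R : Type} [CommSemiring R]
    {I : Type} (T : SimpleGraph I) (U : I → Finset V₀)
    (B : ∀ i, Config Ω (U i) → R)
    (hsep : ∀ i j, T.Adj i j →
      marg (Finset.inter_subset_left : U i ∩ U j ⊆ U i) (B i)
        = marg (Finset.inter_subset_right : U i ∩ U j ⊆ U j) (B j))
    {i j : I} (hadj : T.Adj i j) {W : Finset V₀}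
    (hWi : W ⊆ U i) (hWj : W ⊆ U j) :
    marg hWi (B i) = marg hWj (B j) := by
  have hW : W ⊆ U i ∩ U j := Finset.subset_inter hWi hWj
  calc marg hWi (B i)
      = marg hW (marg Finset.inter_subset_left (B i)) :=
        (marg_marg hW Finset.inter_subset_left (B i)).symm
    _ = marg hW (marg Finset.inter_subset_right (B j)) := by rw [hsep i j hadj]
    _ = marg hWj (B j) := marg_marg hW Finset.inter_subset_right (B j)

/-- Consistency transports along any walk whose clusters all contain `W`. -/
theorem marg_eq_of_walk {V₀ : Type} [DecidableEq V₀]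
    {Ω : V₀ → Type} [∀ v, Fintype (Ω v)] {R : Type} [CommSemiring R]
    {I : Type} (T : SimpleGraph I) (U : I → Finset V₀)
    (B : ∀ i, Config Ω (U i) → R)
    (hsep : ∀ i j, T.Adj i j →
      marg (Finset.inter_subset_left : U i ∩ U j ⊆ U i) (B i)
        = marg (Finset.inter_subset_right : U i ∩ U j ⊆ U j) (B j))
    {i j : I} (p : T.Walk i j) {W : Finset V₀}
    (hW : ∀ t ∈ p.support, W ⊆ U t) :
    marg (hW i p.start_mem_support) (B i) = marg (hW j p.end_mem_support) (B j) := by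
  induction p with
  | nil => rfl
  | @cons a b c hadj q ih =>
    have hWa : W ⊆ U a := hW a (SimpleGraph.Walk.start_mem_support _)
    have hWq : ∀ t ∈ q.support, W ⊆ U t := fun t ht =>
      hW t (by simp [SimpleGraph.Walk.support_cons, ht])
    have hWb : W ⊆ U b := hWq b q.start_mem_support
    calc marg hWa (B a) = marg hWb (B b) := marg_eq_of_adj T U B hsep hadj hWa hWb
      _ = marg (hWq c q.end_mem_support) (B c) := ih hWq

/-- Running intersection forces descent data: on a junction tree (finite tree of clusters
satisfying the running intersection property), edgewise separator consistency of cluster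
beliefs implies pairwise compatibility on ALL overlaps. -/
theorem running_intersection_forces_descent {V₀ : Type} [DecidableEq V₀] [Fintype V₀]
    {Ω : V₀ → Type} [∀ v, Fintype (Ω v)] {R : Type} [CommSemiring R]
    {I : Type} [Fintype I] (T : SimpleGraph I)
    (hconn : T.Connected) (hacyc : T.IsAcyclic)
    (U : I → Finset V₀)
    (hRIP : ∀ (i j : I) (p : T.Walk i j), p.IsPath → ∀ t ∈ p.support, U i ∩ U j ⊆ U t)
    (B : ∀ i, Config Ω (U i) → R)
    (hsep : ∀ i j, T.Adj i j →
      marg (Finset.inter_subset_left : U i ∩ U j ⊆ U i) (B i)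
        = marg (Finset.inter_subset_right : U i ∩ U j ⊆ U j) (B j)) :
    ∀ i j,
      marg (Finset.inter_subset_left : U i ∩ U j ⊆ U i) (B i)
        = marg (Finset.inter_subset_right : U i ∩ U j ⊆ U j) (B j) := by
  classical
  intro i j
  obtain ⟨w⟩ := hconn.preconnected i j
  have hp := w.toPath.2
  have hW : ∀ t ∈ (w.toPath : T.Walk i j).support, U i ∩ U j ⊆ U t :=
    fun t ht => hRIP i j w.toPath hp t ht
  exact marg_eq_of_walk T U B hsep (w.toPath : T.Walk i j) hW
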